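/- Let G be a cubic graph and M1, M2 disjoint matchings with |M1 ∪ M2| maximum. Suppose u1u2u3u4 is a path component (P4) of G − M1 − M2, with v2, v3 the neighbors of u2, u3 outside the path. Then the edges u2v2 and u3v3 lie in the same connected component of the graph G[M1 ∪ M2], and that component is a path. -/

import Mathlib

open SimpleGraph

/-- A matching in `G` given as a set of edges: edges of `G`, pairwise vertex-disjoint. -/
def IsMatchingSet {V : Type*} (G : SimpleGraph V) (M : Set (Sym2 V)) : Prop :=
  M ⊆ G.edgeSet ∧ ∀ e ∈ M, ∀ f ∈ M, e ≠ f → ∀ v, v ∈ e → v ∉ f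

/-- `M1, M2` are disjoint matchings of `G` with `|M1 ∪ M2|` maximum over all pairs of
disjoint matchings of `G`. -/
def MaxDisjointPair {V : Type*} (G : SimpleGraph V) (M1 M2 : Set (Sym2 V)) : Prop :=
  IsMatchingSet G M1 ∧ IsMatchingSet G M2 ∧ Disjoint M1 M2 ∧
  ∀ N1 N2 : Set (Sym2 V), IsMatchingSet G N1 → IsMatchingSet G N2 → Disjoint N1 N2 →
    (N1 ∪ N2).ncard ≤ (M1 ∪ M2).ncard

/-- Adjacency in `Ĝ = G − M1 − M2`: adjacency via an edge of `G` not in `M1 ∪ M2`. -/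
def hatAdj {V : Type*} (G : SimpleGraph V) (M1 M2 : Set (Sym2 V)) (x y : V) : Prop :=
  G.Adj x y ∧ s(x, y) ∉ M1 ∪ M2

/-- The vertices `u1 u2 u3 u4` form a path (`P4`) connected component of
`Ĝ = G − M1 − M2`. -/
def IsP4Component {V : Type*} (G : SimpleGraph V) (M1 M2 : Set (Sym2 V))
    (u1 u2 u3 u4 : V) : Prop :=
  u1 ≠ u2 ∧ u1 ≠ u3 ∧ u1 ≠ u4 ∧ u2 ≠ u3 ∧ u2 ≠ u4 ∧ u3 ≠ u4 ∧
  hatAdj G M1 M2 u1 u2 ∧ hatAdj G M1 M2 u2 u3 ∧ hatAdj G M1 M2 u3 u4 ∧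
  (∀ w, hatAdj G M1 M2 u1 w → w = u2) ∧
  (∀ w, hatAdj G M1 M2 u2 w → w = u1 ∨ w = u3) ∧
  (∀ w, hatAdj G M1 M2 u3 w → w = u2 ∨ w = u4) ∧
  (∀ w, hatAdj G M1 M2 u4 w → w = u3)

namespace Stmt9Aux

variable {V : Type*}

lemma pair_symm {G : SimpleGraph V} {M1 M2 : Set (Sym2 V)} (h : MaxDisjointPair G M1 M2) :
    MaxDisjointPair G M2 M1 :=
  ⟨h.2.1, h.1, h.2.2.1.symm, fun N1 N2 a b c => by
    rw [Set.union_comm M2 M1]; exact h.2.2.2 N1 N2 a b c⟩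

lemma edge_reachable {M : Set (Sym2 V)} {G : SimpleGraph V} (hM : M ⊆ G.edgeSet)
    {e : Sym2 V} (he : e ∈ M) {x y : V} (hx : x ∈ e) (hy : y ∈ e) :
    (SimpleGraph.fromEdgeSet M).Reachable x y := by
  induction e with
  | _ a b =>
    have hab : G.Adj a b := hM he
    have hadj : (SimpleGraph.fromEdgeSet M).Adj a b := by
      rw [SimpleGraph.fromEdgeSet_adj]; exact ⟨he, hab.ne⟩
    rw [Sym2.mem_iff] at hx hy
    rcases hx with rfl | rfl <;> rcases hy with h | h <;> subst h
    · rfl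
    · exact hadj.reachable
    · exact hadj.symm.reachable
    · rfl

lemma augment [Fintype V] {G : SimpleGraph V} {M1 M2 : Set (Sym2 V)}
    (hmax : MaxDisjointPair G M1 M2) {e : Sym2 V} (heG : e ∈ G.edgeSet)
    (hne : e ∉ M1 ∪ M2)
    (hside : ∀ f ∈ M1 ∪ M2, ∀ v, v ∈ e → v ∈ f → f ∈ M1) : False := by
  obtain ⟨h1, h2, hd, hm⟩ := hmax
  have hN2 : IsMatchingSet G (insert e M2) := by
    constructor
    · intro f hf
      rcases hf with rfl | hf
      · exact heG
      · exact h2.1 hf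
    · rintro f (rfl | hf) g (rfl | hg) hfg v hvf hvg
      · exact hfg rfl
      · exact hd.le_bot ⟨hside g (Or.inr hg) v hvf hvg, hg⟩
      · exact hd.le_bot ⟨hside f (Or.inr hf) v hvg hvf, hf⟩
      · exact h2.2 f hf g hg hfg v hvf hvg
  have hdis : Disjoint M1 (insert e M2) := by
    rw [Set.disjoint_left]
    rintro a ha (rfl | ha2)
    · exact hne (Or.inl ha)
    · exact hd.le_bot ⟨ha, ha2⟩
  have hle := hm M1 (insert e M2) h1 hN2 hdis
  rw [Set.union_insert] at hle
  have hfin : (M1 ∪ M2).Finite := Set.toFinite _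
  rw [Set.ncard_insert_of_notMem hne hfin] at hle
  omega

lemma flip {G : SimpleGraph V} {M1 M2 Q : Set (Sym2 V)}
    (h : MaxDisjointPair G M1 M2)
    (hcl : ∀ e ∈ Q, ∀ f ∈ M1 ∪ M2, ∀ v, v ∈ e → v ∈ f → f ∈ Q) :
    MaxDisjointPair G ((M1 \ Q) ∪ (M2 ∩ Q)) ((M2 \ Q) ∪ (M1 ∩ Q)) ∧
      ((M1 \ Q) ∪ (M2 ∩ Q)) ∪ ((M2 \ Q) ∪ (M1 ∩ Q)) = M1 ∪ M2 := by
  obtain ⟨h1, h2, hd, hm⟩ := h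
  have huni : ((M1 \ Q) ∪ (M2 ∩ Q)) ∪ ((M2 \ Q) ∪ (M1 ∩ Q)) = M1 ∪ M2 := by
    ext e
    by_cases hq : e ∈ Q <;> simp [Set.mem_diff, Set.mem_inter_iff, hq] <;> tauto
  have hmix : ∀ {A B : Set (Sym2 V)}, IsMatchingSet G A → IsMatchingSet G B →
      (A ⊆ M1 ∪ M2) → (B ⊆ M1 ∪ M2) →
      IsMatchingSet G ((A \ Q) ∪ (B ∩ Q)) := by
    intro A B hA hB hAs hBs
    constructor
    · rintro f (hf | hf)
      · exact hA.1 hf.1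
      · exact hB.1 hf.1
    · rintro f (hf | hf) g (hg | hg) hfg v hvf hvg
      · exact hA.2 f hf.1 g hg.1 hfg v hvf hvg
      · exact hf.2 (hcl g hg.2 f (hAs hf.1) v hvg hvf)
      · exact hg.2 (hcl f hf.2 g (hAs hg.1) v hvf hvg)
      · exact hB.2 f hf.1 g hg.1 hfg v hvf hvg
  refine ⟨⟨hmix h1 h2 (Set.subset_union_left) (Set.subset_union_right),
    hmix h2 h1 (Set.subset_union_right) (Set.subset_union_left), ?_, ?_⟩, huni⟩
  · rw [Set.disjoint_left]
    rintro a (ha | ha) (hb | hb)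
    · exact hd.le_bot ⟨ha.1, hb.1⟩
    · exact ha.2 hb.2
    · exact hb.2 ha.2
    · exact hd.le_bot ⟨hb.1, ha.1⟩
  · intro N1 N2 a b c
    rw [huni]
    exact hm N1 N2 a b c

lemma cycle_two_neighbors {H : SimpleGraph V} {w : V} (q : H.Walk w w) (hq : q.IsCycle) :
    ∃ a b, a ≠ b ∧ H.Adj w a ∧ H.Adj w b ∧ a ∈ q.support ∧ b ∈ q.support := by
  have hlen : 3 ≤ q.length := hq.three_le_length
  cases q with
  | nil => exact absurd rfl hq.ne_nil
  | @cons _ x _ hwx r =>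
    rw [Walk.cons_isCycle_iff] at hq
    have hrlen : 2 ≤ r.length := by
      simp only [Walk.length_cons] at hlen; omega
    have hi : r.length - 1 < r.length := by omega
    obtain ⟨b, hb⟩ : ∃ b, b = r.getVert (r.length - 1) := ⟨_, rfl⟩
    have hadjb : H.Adj b w := by
      rw [hb]
      have := r.adj_getVert_succ hi
      rwa [Nat.sub_add_cancel (by omega), r.getVert_length] at this
    have hedge : s(b, w) ∈ r.edges := by
      rw [hb]
      have h2 := r.toSubgraph_adj_getVert hi
      rw [Nat.sub_add_cancel (by omega), r.getVert_length] at h2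
      rw [← Walk.mem_edges_toSubgraph]
      exact h2
    have hxb : x ≠ b := by
      intro hxb'
      apply hq.2
      have heq : s(w, x) = s(b, w) := by rw [hxb', Sym2.eq_swap]
      rw [heq]
      exact hedge
    refine ⟨x, b, hxb, hwx, hadjb.symm, ?_, ?_⟩
    · simp [Walk.support_cons]
    · rw [Walk.support_cons]
      right
      exact Walk.mem_support_iff_exists_getVert.mpr ⟨r.length - 1, hb.symm, by omega⟩

lemma cycle_support_closed {H : SimpleGraph V} [DecidableEq V] {v w x : V}
    (p : H.Walk v v) (hp : p.IsCycle)
    (hdeg : ∀ y c a b : V, H.Adj y c → H.Adj y a → H.Adj y b → a ≠ b → c = a ∨ c = b)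
    (hw : w ∈ p.support) (hx : H.Adj w x) : x ∈ p.support := by
  obtain ⟨a, b, hab, ha, hb, has, hbs⟩ := cycle_two_neighbors (p.rotate w hw) (hp.rotate hw)
  have hperm := (Walk.support_rotate p w hw).perm
  have htrans : ∀ y, y ≠ w → y ∈ (p.rotate w hw).support → y ∈ p.support := by
    intro y hy hmem
    rw [Walk.support_eq_cons, List.mem_cons] at hmem
    rcases hmem with hy' | hmem
    · exact absurd hy' hy
    · have : y ∈ p.support.tail := hperm.mem_iff.mp hmem
      exact List.mem_of_mem_tail this
  rcases hdeg w x a b hx ha hb hab with rfl | rfl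
  · exact htrans _ hx.ne' has
  · exact htrans _ hx.ne' hbs

lemma reach_closed {H : SimpleGraph V} (S : Set V)
    (hS : ∀ w x, w ∈ S → H.Adj w x → x ∈ S) {y z : V} (W : H.Walk y z) (hy : y ∈ S) :
    z ∈ S := by
  induction W with
  | nil => exact hy
  | cons h _ ih => exact ih (hS _ _ hy h)

end Stmt9Aux

open Stmt9Aux

theorem stmt9 {V : Type*} [Fintype V] (G : SimpleGraph V) [DecidableRel G.Adj]
    (hcubic : ∀ v : V, G.degree v = 3) (M1 M2 : Set (Sym2 V))
    (hmax : MaxDisjointPair G M1 M2)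
    (u1 u2 u3 u4 : V) (hP : IsP4Component G M1 M2 u1 u2 u3 u4)
    (v2 v3 : V) (hv2 : G.Adj u2 v2) (hv2' : v2 ≠ u1) (hv2'' : v2 ≠ u3)
    (hv3 : G.Adj u3 v3) (hv3' : v3 ≠ u2) (hv3'' : v3 ≠ u4) :
    -- the edges `u2v2` and `u3v3` lie in the same connected component of
    -- `G[M1 ∪ M2]`, and that component is a path (contains no cycle)
    (SimpleGraph.fromEdgeSet (M1 ∪ M2)).Reachable u2 u3 ∧
      ∀ v : V, (SimpleGraph.fromEdgeSet (M1 ∪ M2)).Reachable u2 v →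
        ∀ p : (SimpleGraph.fromEdgeSet (M1 ∪ M2)).Walk v v, ¬ p.IsCycle := by
  classical
  obtain ⟨h12, h13, h14, h23, h24, h34, ha12, ha23, ha34, hn1, hn2, hn3, hn4⟩ := hP
  set H := SimpleGraph.fromEdgeSet (M1 ∪ M2) with hHdef
  have hMG : M1 ∪ M2 ⊆ G.edgeSet := Set.union_subset hmax.1.1 hmax.2.1.1
  -- neighborhood of u2 / u3
  have hnbrfin2 : ({u1, u3, v2} : Finset V) = G.neighborFinset u2 := by
    apply Finset.eq_of_subset_of_card_le
    · intro x hx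
      simp only [Finset.mem_insert, Finset.mem_singleton] at hx
      rw [SimpleGraph.mem_neighborFinset]
      rcases hx with rfl | rfl | rfl
      · exact ha12.1.symm
      · exact ha23.1
      · exact hv2
    · rw [← SimpleGraph.degree, hcubic u2]
      rw [Finset.card_insert_of_notMem (by simp [h13, hv2'.symm]),
        Finset.card_insert_of_notMem (by simp [hv2''.symm]), Finset.card_singleton]
  have hnbrfin3 : ({u2, u4, v3} : Finset V) = G.neighborFinset u3 := by
    apply Finset.eq_of_subset_of_card_le
    · intro x hx
      simp only [Finset.mem_insert, Finset.mem_singleton] at hx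
      rw [SimpleGraph.mem_neighborFinset]
      rcases hx with rfl | rfl | rfl
      · exact ha23.1.symm
      · exact ha34.1
      · exact hv3
    · rw [← SimpleGraph.degree, hcubic u3]
      rw [Finset.card_insert_of_notMem (by simp [h24, hv3'.symm]),
        Finset.card_insert_of_notMem (by simp [hv3''.symm]), Finset.card_singleton]
  have hnbr2 : ∀ e ∈ M1 ∪ M2, u2 ∈ e → e = s(u2, v2) := by
    intro e heM heu
    obtain ⟨x, rfl⟩ : ∃ x, e = s(u2, x) := ⟨Sym2.Mem.other heu, (Sym2.other_spec heu).symm⟩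
    have hadjx : G.Adj u2 x := (SimpleGraph.mem_edgeSet G).mp (hMG heM)
    have hx : x ∈ ({u1, u3, v2} : Finset V) := by
      rw [hnbrfin2, SimpleGraph.mem_neighborFinset]; exact hadjx
    simp only [Finset.mem_insert, Finset.mem_singleton] at hx
    rcases hx with rfl | rfl | rfl
    · exact absurd (by rwa [Sym2.eq_swap] at heM) ha12.2
    · exact absurd heM ha23.2
    · rfl
  have hnbr3 : ∀ e ∈ M1 ∪ M2, u3 ∈ e → e = s(u3, v3) := by
    intro e heM heu
    obtain ⟨x, rfl⟩ : ∃ x, e = s(u3, x) := ⟨Sym2.Mem.other heu, (Sym2.other_spec heu).symm⟩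
    have hadjx : G.Adj u3 x := (SimpleGraph.mem_edgeSet G).mp (hMG heM)
    have hx : x ∈ ({u2, u4, v3} : Finset V) := by
      rw [hnbrfin3, SimpleGraph.mem_neighborFinset]; exact hadjx
    simp only [Finset.mem_insert, Finset.mem_singleton] at hx
    rcases hx with rfl | rfl | rfl
    · exact absurd (by rwa [Sym2.eq_swap] at heM) ha23.2
    · exact absurd heM ha34.2
    · rfl
  have h2M : s(u2, v2) ∈ M1 ∪ M2 := by
    by_contra h
    rcases hn2 v2 ⟨hv2, h⟩ with h' | h'
    · exact hv2' h'
    · exact hv2'' h'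
  have h3M : s(u3, v3) ∈ M1 ∪ M2 := by
    by_contra h
    rcases hn3 v3 ⟨hv3, h⟩ with h' | h'
    · exact hv3' h'
    · exact hv3'' h'
  -- max degree two in H
  have hsame : ∀ {M : Set (Sym2 V)}, IsMatchingSet G M → ∀ {w y z : V},
      s(w, y) ∈ M → s(w, z) ∈ M → y ≠ z → False := by
    intro M hM w y z hy hz hyz
    have hne : s(w, y) ≠ s(w, z) := fun h => hyz (Sym2.congr_right.mp h)
    exact hM.2 _ hy _ hz hne w (Sym2.mem_mk_left w y) (Sym2.mem_mk_left w z)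
  have hdeg : ∀ y c a b : V, H.Adj y c → H.Adj y a → H.Adj y b → a ≠ b → c = a ∨ c = b := by
    intro y c a b hc ha hb hab
    by_contra hcon
    push_neg at hcon
    obtain ⟨hca, hcb⟩ := hcon
    rw [hHdef, SimpleGraph.fromEdgeSet_adj] at hc ha hb
    rcases hc.1 with h | h <;> rcases ha.1 with h' | h' <;> rcases hb.1 with h'' | h''
    · exact hsame hmax.1 h h' hca
    · exact hsame hmax.1 h h' hca
    · exact hsame hmax.1 h h'' hcb
    · exact hsame hmax.2.1 h' h'' hab
    · exact hsame hmax.1 h' h'' hab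
    · exact hsame hmax.2.1 h h'' hcb
    · exact hsame hmax.2.1 h h' hca
    · exact hsame hmax.2.1 h h' hca
  -- part 1 : reachability
  have hreach : H.Reachable u2 u3 := by
    by_contra hR
    set Q : Set (Sym2 V) := {e | e ∈ M1 ∪ M2 ∧ ∃ x ∈ e, H.Reachable u3 x} with hQdef
    have hQreach : ∀ e ∈ Q, ∀ y, y ∈ e → H.Reachable u3 y := by
      rintro e ⟨hm, x, hx, hrx⟩ y hy
      exact hrx.trans (edge_reachable hMG hm hx hy)
    have hQcl : ∀ e ∈ Q, ∀ f ∈ M1 ∪ M2, ∀ v, v ∈ e → v ∈ f → f ∈ Q := by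
      intro e he f hf v hv hvf
      exact ⟨hf, v, hvf, hQreach e he v hv⟩
    have h2Q : s(u2, v2) ∉ Q := by
      intro h
      exact hR (hQreach _ h u2 (Sym2.mem_mk_left u2 v2)).symm
    have h3Q : s(u3, v3) ∈ Q := ⟨h3M, u3, Sym2.mem_mk_left u3 v3, Reachable.refl u3⟩
    have heG : s(u2, u3) ∈ G.edgeSet := ha23.1
    have hneM : s(u2, u3) ∉ M1 ∪ M2 := ha23.2
    have hmem23 : ∀ {N1 N2 : Set (Sym2 V)}, N1 ∪ N2 = M1 ∪ M2 →
        s(u2, v2) ∈ N1 → s(u3, v3) ∈ N1 → MaxDisjointPair G N1 N2 → False := by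
      intro N1 N2 huni h2N h3N hmaxN
      apply augment hmaxN heG (by rw [huni]; exact hneM)
      intro f hf v hv hvf
      rw [huni] at hf
      rw [Sym2.mem_iff] at hv
      rcases hv with rfl | rfl
      · rw [hnbr2 f hf hvf]; exact h2N
      · rw [hnbr3 f hf hvf]; exact h3N
    rcases h2M with h2M1 | h2M2 <;> rcases h3M with h3M1 | h3M2
    · exact hmem23 rfl h2M1 h3M1 hmax
    · -- mixed: flip component of u3
      obtain ⟨hmax', huni⟩ := Stmt9Aux.flip hmax hQcl
      exact hmem23 huni (Or.inl ⟨h2M1, h2Q⟩) (Or.inr ⟨h3M2, h3Q⟩) hmax'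
    · obtain ⟨hmax', huni⟩ := Stmt9Aux.flip (pair_symm hmax) (by
        intro e he f hf v hv hvf
        exact hQcl e he f (Set.union_comm M2 M1 ▸ hf) v hv hvf)
      rw [Set.union_comm M2 M1] at huni
      exact hmem23 huni (Or.inl ⟨h2M2, h2Q⟩) (Or.inr ⟨h3M1, h3Q⟩) hmax'
    · exact hmem23 (Set.union_comm M2 M1) h2M2 h3M2 (pair_symm hmax)
  refine ⟨hreach, ?_⟩
  -- part 2 : no cycles in the component of u2
  intro v hv p hp
  have hdeg2 : ∀ x, H.Adj u2 x → x = v2 := by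
    intro x hx
    rw [hHdef, SimpleGraph.fromEdgeSet_adj] at hx
    exact Sym2.congr_right.mp (hnbr2 _ hx.1 (Sym2.mem_mk_left u2 x))
  have hu2 : u2 ∈ p.support := by
    obtain ⟨W⟩ := hv
    exact reach_closed {x | x ∈ p.support}
      (fun w x hw hx => cycle_support_closed p hp hdeg hw hx) W.reverse p.end_mem_support
  obtain ⟨a, b, hab, ha, hb, _, _⟩ := cycle_two_neighbors (p.rotate u2 hu2) (hp.rotate hu2)
  exact hab ((hdeg2 a ha).trans (hdeg2 b hb).symm)
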